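/- Let ε > 0 and α > 0, and define φ : ℝ² → ℝ by φ(x) = −2·ln(|x|² + ε). Then ∫_{B_{α·√ε}(0)} ‖∇φ(x)‖² dx = 16π·( ln(1 + α²) − α²/(1 + α²) ), where B_{α·√ε}(0) is the open Euclidean ball of radius α·√ε centered at the origin and ∇φ is the Euclidean gradient. In particular this quantity is independent of ε. -/

import Mathlib

open MeasureTheory Real Set InnerProductSpace

private lemma grad_eq (ε : ℝ) (hε : 0 < ε) (x : EuclideanSpace ℝ (Fin 2)) :
    HasGradientAt (fun x : EuclideanSpace ℝ (Fin 2) => -2 * Real.log (‖x‖ ^ 2 + ε))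
      ((-4 / (‖x‖ ^ 2 + ε)) • x) x := by
  have hs : (0:ℝ) < ‖x‖ ^ 2 + ε := by positivity
  have h1 : HasFDerivAt (fun y : EuclideanSpace ℝ (Fin 2) => ‖y‖ ^ 2 + ε)
      (2 • (innerSL ℝ x)) x := by
    simpa using ((hasFDerivAt_id x).norm_sq).add_const ε
  have h2 := (h1.log hs.ne').const_mul (-2 : ℝ)
  rw [hasGradientAt_iff_hasFDerivAt]
  refine h2.congr_fderiv ?_
  ext y
  simp only [toDual_apply_apply, innerSL_apply_apply, ContinuousLinearMap.coe_smul',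
    Pi.smul_apply, ContinuousLinearMap.smul_apply, smul_eq_mul, real_inner_smul_left]
  rw [div_eq_mul_inv]; ring

private lemma oneD (ε R : ℝ) (hε : 0 < ε) (hR : 0 < R) :
    ∫ r in Set.Ioo (0:ℝ) R, r * (16 * r ^ 2 / (r ^ 2 + ε) ^ 2) =
      8 * (Real.log (R ^ 2 + ε) + ε / (R ^ 2 + ε) - Real.log ε - 1) := by
  have hcont : Continuous (fun r : ℝ => r * (16 * r ^ 2 / (r ^ 2 + ε) ^ 2)) := by
    apply Continuous.mul continuous_id
    apply Continuous.div (by continuity) (by continuity)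
    intro r; positivity
  have hderiv : ∀ r ∈ Set.uIcc (0:ℝ) R,
      HasDerivAt (fun r : ℝ => 8 * (Real.log (r ^ 2 + ε) + ε / (r ^ 2 + ε)))
        (r * (16 * r ^ 2 / (r ^ 2 + ε) ^ 2)) r := by
    intro r _
    have hs : (0:ℝ) < r ^ 2 + ε := by positivity
    have h1 : HasDerivAt (fun r : ℝ => r ^ 2 + ε) (2 * r) r := by
      simpa using (hasDerivAt_pow 2 r).add_const ε
    have h2 : HasDerivAt (fun r : ℝ => Real.log (r ^ 2 + ε)) (2 * r / (r ^ 2 + ε)) r :=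
      h1.log hs.ne'
    have h3 : HasDerivAt (fun r : ℝ => ε / (r ^ 2 + ε))
        (-(ε * (2 * r)) / (r ^ 2 + ε) ^ 2) r := by
      have := (hasDerivAt_const r ε).div h1 hs.ne'
      refine this.congr_deriv ?_
      ring
    have := ((h2.add h3).const_mul 8)
    refine this.congr_deriv ?_
    field_simp
    ring
  rw [← MeasureTheory.integral_Ioc_eq_integral_Ioo,
    ← intervalIntegral.integral_of_le hR.le,
    intervalIntegral.integral_eq_sub_of_hasDerivAt hderiv
      (hcont.intervalIntegrable 0 R)]
  have : ((0:ℝ) ^ 2 + ε) = ε := by ring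
  rw [this]
  field_simp
  ring

theorem stmt_12 (ε α : ℝ) (hε : 0 < ε) (hα : 0 < α)
    (φ : EuclideanSpace ℝ (Fin 2) → ℝ)
    (hφ : ∀ x, φ x = -2 * Real.log (‖x‖ ^ 2 + ε)) :
    ∫ x in Metric.ball (0 : EuclideanSpace ℝ (Fin 2)) (α * Real.sqrt ε),
        ‖gradient φ x‖ ^ 2 =
      16 * Real.pi * (Real.log (1 + α ^ 2) - α ^ 2 / (1 + α ^ 2)) := by
  have hφ' : φ = fun x => -2 * Real.log (‖x‖ ^ 2 + ε) := funext hφ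
  subst hφ'
  set R : ℝ := α * Real.sqrt ε with hRdef
  have hR : 0 < R := by positivity
  set g : ℝ → ℝ := fun r => 16 * r ^ 2 / (r ^ 2 + ε) ^ 2 with hg
  -- pointwise value of the integrand
  have hpt : ∀ x : EuclideanSpace ℝ (Fin 2),
      ‖gradient (fun x => -2 * Real.log (‖x‖ ^ 2 + ε)) x‖ ^ 2 = g ‖x‖ := by
    intro x
    have hs : (0:ℝ) < ‖x‖ ^ 2 + ε := by positivity
    rw [(grad_eq ε hε x).gradient, norm_smul, mul_pow, hg]
    have : ‖-4 / (‖x‖ ^ 2 + ε)‖ = 4 / (‖x‖ ^ 2 + ε) := by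
      rw [Real.norm_eq_abs, abs_div, abs_neg]
      simp [abs_of_pos hs]
    rw [this, div_pow]
    ring
  simp only [hpt]
  -- pass to indicator form
  rw [← integral_indicator measurableSet_ball]
  have hind : ∀ x : EuclideanSpace ℝ (Fin 2),
      (Metric.ball (0 : EuclideanSpace ℝ (Fin 2)) R).indicator (fun x => g ‖x‖) x
        = (Set.Iio R).indicator g ‖x‖ := by
    intro x
    by_cases h : ‖x‖ < R
    · rw [Set.indicator_of_mem (by simpa [mem_ball_zero_iff] using h),
        Set.indicator_of_mem (by simpa using h)]
    · rw [Set.indicator_of_notMem (by simpa [mem_ball_zero_iff] using h),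
        Set.indicator_of_notMem (by simpa using h)]
  simp only [hind]
  rw [integral_fun_norm_addHaar (volume : Measure (EuclideanSpace ℝ (Fin 2)))
    ((Set.Iio R).indicator g)]
  have hdim : Module.finrank ℝ (EuclideanSpace ℝ (Fin 2)) = 2 := finrank_euclideanSpace_fin
  rw [hdim]
  -- volume of the unit ball
  have hvol : (volume (Metric.ball (0 : EuclideanSpace ℝ (Fin 2)) 1)).toReal = Real.pi := by
    rw [EuclideanSpace.volume_ball]
    rw [show ((Fintype.card (Fin 2) : ℝ) / 2 + 1) = 1 + 1 by norm_num,
      Real.Gamma_add_one one_ne_zero, Real.Gamma_one]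
    simp [Real.sq_sqrt Real.pi_pos.le, ENNReal.toReal_ofReal Real.pi_pos.le]
  rw [measureReal_def, hvol]
  -- reduce the radial integral
  have hrad : ∫ y in Set.Ioi (0:ℝ), y ^ (2 - 1) • (Set.Iio R).indicator g y
      = ∫ r in Set.Ioo (0:ℝ) R, r * g r := by
    have : ∀ y : ℝ, y ^ (2 - 1) • (Set.Iio R).indicator g y
        = (Set.Iio R).indicator (fun r => r * g r) y := by
      intro y
      by_cases h : y < R
      · simp [Set.indicator_of_mem, h, smul_eq_mul]
      · simp [Set.indicator_of_notMem, h]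
    simp only [this]
    rw [integral_indicator measurableSet_Iio, Measure.restrict_restrict measurableSet_Iio,
      Set.Iio_inter_Ioi]
  rw [hrad, oneD ε R hε hR]
  have hR2 : R ^ 2 = α ^ 2 * ε := by
    rw [hRdef, mul_pow, Real.sq_sqrt hε.le]
  have h1α : (0:ℝ) < 1 + α ^ 2 := by positivity
  have hlog : Real.log (R ^ 2 + ε) = Real.log ε + Real.log (1 + α ^ 2) := by
    rw [hR2, show α ^ 2 * ε + ε = ε * (1 + α ^ 2) by ring,
      Real.log_mul hε.ne' h1α.ne']
  have hfrac : ε / (R ^ 2 + ε) = 1 / (1 + α ^ 2) := by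
    rw [hR2]
    rw [show α ^ 2 * ε + ε = ε * (1 + α ^ 2) by ring]
    rw [div_mul_eq_div_div_swap]
    field_simp
  rw [hlog, hfrac]
  rw [smul_eq_mul, nsmul_eq_mul]
  push_cast
  field_simp
  ring
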